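/- arXiv:2312.13884 — 4 statements merged into one kernel-verified Lean document; each statement's English description precedes it below -/
import Mathlib

section
/- If I is a finite set of interventions with p̃(κ) > 0 for every κ ∈ I with κ ≠ id, then for every H ∈ σ^I(G) the infimum C(G,H) = inf{p(κ) : κ ∈ [I], κ(G) = H} is attained: there is a strategy κ ∈ [I] with κ(G) = H and p(κ) = C(G,H). -/
/-- `κ` is a finite composition of maps from `I` (including the identity). -/
def IsStrategy {G : Type*} (I : Set (G → G)) (κ : G → G) : Prop :=
  ∃ l : List (G → G), (∀ f ∈ l, f ∈ I) ∧ l.foldr (· ∘ ·) id = κ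

/-- `σ^I(g)`: the set of all elements obtainable from `g` by `I`-strategies. -/
def reach {G : Type*} (I : Set (G → G)) (g : G) : Set G :=
  {h | ∃ κ : G → G, IsStrategy I κ ∧ κ g = h}

/-- The price `p(κ)` of a strategy: the infimum of `∑ p̃(κᵢ)` over all
decompositions `κ = κₙ ∘ ⋯ ∘ κ₁` with `κᵢ ∈ I` (`inf ∅ = ∞` in `EReal`). -/
noncomputable def price {G : Type*} (ptilde : (G → G) → ℝ) (I : Set (G → G))
    (κ : G → G) : EReal :=
  sInf {x : EReal | ∃ l : List (G → G), (∀ f ∈ l, f ∈ I) ∧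
    l.foldr (· ∘ ·) id = κ ∧ x = ((l.map ptilde).sum : ℝ)}

/-- The monetary cost `C(g,h) = inf { p(κ) : κ ∈ [I], κ(g) = h }`. -/
noncomputable def cost {G : Type*} (ptilde : (G → G) → ℝ) (I : Set (G → G))
    (g h : G) : EReal :=
  sInf {x : EReal | ∃ κ : G → G, IsStrategy I κ ∧ κ g = h ∧ x = price ptilde I κ}


/-- Removing identity entries from a list preserves composition and price sum. -/
lemma removeIds {G : Type*} {I : Set (G → G)} (ptilde : (G → G) → ℝ) (hid : ptilde id = 0)
    (l : List (G → G)) (hl : ∀ f ∈ l, f ∈ I) :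
    ∃ l' : List (G → G), (∀ f ∈ l', f ∈ I ∧ f ≠ id) ∧
      l'.foldr (· ∘ ·) id = l.foldr (· ∘ ·) id ∧
      (l'.map ptilde).sum = (l.map ptilde).sum := by
  induction l with
  | nil => exact ⟨[], by simp, rfl, rfl⟩
  | cons f t ih =>
    obtain ⟨t', ht'I, ht'f, ht's⟩ := ih (fun x hx => hl x (List.mem_cons_of_mem _ hx))
    by_cases hf : f = (id : G → G)
    · refine ⟨t', ht'I, ?_, ?_⟩
      · simp [hf, ht'f]
      · simp [hf, hid, ht's]
    · refine ⟨f :: t', ?_, by simp [ht'f], by simp [ht's]⟩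
      rintro x hx
      rcases List.mem_cons.1 hx with rfl | hx
      · exact ⟨hl x List.mem_cons_self, hf⟩
      · exact ht'I x hx


/-- If `I` is finite and every nonidentity intervention has a strictly
positive price, then for every `h ∈ σ^I(g)` there is an optimal strategy:
some `κ ∈ [I]` with `κ(g) = h` and `p(κ) = C(g,h)`. -/
theorem stmt_5 {G : Type*} (I : Set (G → G)) (hfin : I.Finite)
    (ptilde : (G → G) → ℝ) (hpos : ∀ f ∈ I, 0 ≤ ptilde f) (hid : ptilde id = 0)
    (hpos' : ∀ f ∈ I, f ≠ id → 0 < ptilde f)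
    (g h : G) (hh : h ∈ reach I g) :
    ∃ κ : G → G, IsStrategy I κ ∧ κ g = h ∧
      price ptilde I κ = cost ptilde I g h := by

  classical
  -- the set of id-free decomposition sums of strategies taking g to h
  set S : Set ℝ := {x | ∃ l : List (G → G), (∀ f ∈ l, f ∈ I ∧ f ≠ id) ∧
    (l.foldr (· ∘ ·) id) g = h ∧ x = (l.map ptilde).sum} with hS
  -- S is nonempty
  obtain ⟨κ₀, ⟨l₀, hl₀I, hl₀⟩, hκ₀⟩ := hh
  obtain ⟨l₀', hl₀'I, hl₀'f, hl₀'s⟩ := removeIds (I := I) ptilde hid l₀ hl₀I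
  have ha : ((l₀'.map ptilde).sum) ∈ S := by
    refine ⟨l₀', hl₀'I, ?_, rfl⟩
    rw [hl₀'f, hl₀]; exact hκ₀
  set a : ℝ := (l₀'.map ptilde).sum with haz
  -- length bound for id-free lists with sum ≤ a
  have hbound : ∃ N : ℕ, ∀ l : List (G → G), (∀ f ∈ l, f ∈ I ∧ f ≠ id) →
      (l.map ptilde).sum ≤ a → l.length ≤ N := by
    set J := I \ {id} with hJ
    rcases J.eq_empty_or_nonempty with hz | hz
    · refine ⟨0, fun l hl hsum => ?_⟩
      rcases List.eq_nil_or_concat l with rfl | ⟨l', f, rfl⟩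
      · simp
      · exfalso
        have : f ∈ J := by
          have := hl f (by simp)
          exact ⟨this.1, this.2⟩
        rw [hz] at this; exact this.elim
    · have hJfin : J.Finite := hfin.subset Set.diff_subset
      obtain ⟨f₀, hf₀, hmin⟩ := Set.exists_min_image J ptilde hJfin hz
      set ε : ℝ := ptilde f₀ with hε
      have hεpos : 0 < ε := hpos' f₀ hf₀.1 hf₀.2
      refine ⟨Nat.floor (a / ε), fun l hl hsum => ?_⟩
      have hls : (l.length : ℝ) * ε ≤ (l.map ptilde).sum := by
        have := List.card_nsmul_le_sum (l.map ptilde) ε ?_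
        · simpa [nsmul_eq_mul, mul_comm] using this
        · intro x hx
          obtain ⟨f, hf, rfl⟩ := List.mem_map.1 hx
          exact hmin f ⟨(hl f hf).1, (hl f hf).2⟩
      have : (l.length : ℝ) ≤ a / ε := by
        rw [le_div_iff₀ hεpos]
        exact hls.trans hsum
      exact Nat.le_floor this
  obtain ⟨N, hN⟩ := hbound
  -- the truncated set T is finite
  have hTfin : (S ∩ Set.Iic a).Finite := by
    have hJfin : Set.Finite {f : G → G | f ∈ I ∧ f ≠ id} := hfin.subset (fun f hf => hf.1)
    have : (S ∩ Set.Iic a) ⊆ (fun l : List (G → G) => (l.map ptilde).sum) ''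
        {l : List (G → G) | (∀ f ∈ l, f ∈ I ∧ f ≠ id) ∧ l.length ≤ N} := by
      rintro x ⟨⟨l, hlI, hlg, rfl⟩, hxa⟩
      exact ⟨l, ⟨hlI, hN l hlI hxa⟩, rfl⟩
    refine Set.Finite.subset (Set.Finite.image _ ?_) this
    -- lists with entries in a finite set and bounded length form a finite set
    have : Finite {f : G → G // f ∈ I ∧ f ≠ id} := hJfin
    have hfin2 := List.finite_length_le {f : G → G // f ∈ I ∧ f ≠ id} N
    have := hfin2.image (List.map Subtype.val)
    refine this.subset ?_
    rintro l ⟨hlI, hlen⟩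
    refine ⟨l.attach.map (fun x => ⟨x.1, hlI x.1 x.2⟩), ?_, ?_⟩
    · simpa using hlen
    · simp [List.map_map]
  -- extract the minimum of T
  have hTne : ((S ∩ Set.Iic a)).Nonempty := ⟨a, ha, le_refl a⟩
  obtain ⟨m, ⟨hmS, hma⟩, hm⟩ := Set.exists_min_image _ (fun x => x) hTfin hTne
  -- m is a lower bound for all of S
  have hmlb : ∀ x ∈ S, m ≤ x := by
    intro x hx
    by_cases hxa : x ≤ a
    · exact hm x ⟨hx, hxa⟩
    · exact (hm a ⟨ha, le_refl a⟩).trans (le_of_not_ge hxa)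
  obtain ⟨lm, hlmI, hlmg, hms⟩ := hmS
  set κ : G → G := lm.foldr (· ∘ ·) id with hκ
  have hstrat : IsStrategy I κ := ⟨lm, fun f hf => (hlmI f hf).1, rfl⟩
  -- price κ = m
  have hprice : price ptilde I κ = (m : EReal) := by
    apply IsLeast.csInf_eq
    constructor
    · exact ⟨lm, fun f hf => (hlmI f hf).1, rfl, by rw [hms]⟩
    · rintro x ⟨l, hlI, hlκ, rfl⟩
      obtain ⟨l', hl'I, hl'f, hl's⟩ := removeIds (I := I) ptilde hid l hlI
      have hx : ((l.map ptilde).sum) ∈ S := by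
        refine ⟨l', hl'I, ?_, hl's.symm⟩
        rw [hl'f, hlκ]; exact hlmg
      exact_mod_cast hmlb _ hx
  -- cost = m
  have hcost : cost ptilde I g h = (m : EReal) := by
    apply le_antisymm
    · exact sInf_le ⟨κ, hstrat, hlmg, hprice.symm⟩
    · apply le_sInf
      rintro x ⟨κ', hstrat', hκ'g, rfl⟩
      apply le_sInf
      rintro y ⟨l, hlI, hlκ, rfl⟩
      obtain ⟨l', hl'I, hl'f, hl's⟩ := removeIds (I := I) ptilde hid l hlI
      have hx : ((l.map ptilde).sum) ∈ S := by
        refine ⟨l', hl'I, ?_, hl's.symm⟩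
        rw [hl'f, hlκ]; exact hκ'g
      exact_mod_cast hmlb _ hx
  exact ⟨κ, hstrat, hlmg, by rw [hprice, hcost]⟩
end

section
/- There exist finite directed graphs G and H, where H arises from G by a node splitting (adding a new node ṽ and rerouting a nonempty proper subset of the edges incident to a node v to ṽ), such that the graph efficiency F(H) > F(G). In other words, graph efficiency based on shortest paths is not monotonically non-increasing under node splitting. -/
open scoped ENNReal

/-- There is a directed walk of length `n` from `v` to `w` using edges of `E`. -/
def HasWalk {V : Type*} (E : Finset (V × V)) (v w : V) (n : ℕ) : Prop :=
  ∃ f : Fin (n + 1) → V, f 0 = v ∧ f (Fin.last n) = w ∧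
    ∀ i : Fin n, (f i.castSucc, f i.succ) ∈ E

/-- The shortest directed path length from `v` to `w` (`∞` if there is no path). -/
noncomputable def ddist {V : Type*} (E : Finset (V × V)) (v w : V) : ℝ≥0∞ :=
  sInf {x : ℝ≥0∞ | ∃ n : ℕ, HasWalk E v w n ∧ x = n}

/-- Graph efficiency `F(G) = (1/(N(N-1))) ∑_{v ≠ w} 1 / l_{vw}`, with `1/∞ = 0`. -/
noncomputable def graphEff (V : Type*) [Fintype V] [DecidableEq V]
    (E : Finset (V × V)) : ℝ≥0∞ :=
  ((Fintype.card V : ℝ≥0∞) * ((Fintype.card V : ℝ≥0∞) - 1))⁻¹ *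
    ∑ v : V, ∑ w : V, if v ≠ w then (ddist E v w)⁻¹ else 0

/-- Splitting of node `v`: a new node (`none`) is added, and every edge of `E`
in `L` that leaves `v` is rerouted to leave the new node, every edge of `E`
in `L` that enters `v` is rerouted to enter the new node. -/
def splitEdges {V : Type*} [DecidableEq V] (E L : Finset (V × V)) (v : V) :
    Finset (Option V × Option V) :=
  E.image fun e =>
    if e ∈ L ∧ e.1 = v then (none, some e.2)
    else if e ∈ L ∧ e.2 = v then (some e.1, none)
    else (some e.1, some e.2)

/-- The node split of `v` in `(V, E)` along `L` strictly increases graph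
efficiency. -/
def SplitIncreasesEff (V : Type) [Fintype V] [DecidableEq V]
    (E L : Finset (V × V)) (v : V) : Prop :=
  graphEff V E < graphEff (Option V) (splitEdges E L v)

/-! ### Auxiliary material for the example -/

instance {V : Type*} [Fintype V] [DecidableEq V] (E : Finset (V × V)) (v w : V) (n : ℕ) :
    Decidable (HasWalk E v w n) := by unfold HasWalk; infer_instance

/-- The triangle on `0, 1, 2` (bidirected) together with three isolated nodes. -/
def E6 : Finset (Fin 6 × Fin 6) := {(0,1),(1,0),(0,2),(2,0),(1,2),(2,1)}

/-- The edges between `1` and `2`, to be rerouted. -/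
def L6 : Finset (Fin 6 × Fin 6) := {(1,2),(2,1)}

lemma ddist_le {V : Type*} {E : Finset (V × V)} {v w : V} {n : ℕ}
    (h : HasWalk E v w n) : ddist E v w ≤ n := sInf_le ⟨n, h, rfl⟩

lemma one_le_ddist {V : Type*} {E : Finset (V × V)} {v w : V} (hne : v ≠ w) :
    1 ≤ ddist E v w := by
  refine le_sInf ?_
  rintro x ⟨n, hw, rfl⟩
  rcases n with _ | n
  · obtain ⟨f, h0, hl, -⟩ := hw
    exact absurd (h0 ▸ hl ▸ rfl) hne
  · exact_mod_cast Nat.one_le_iff_ne_zero.mpr (Nat.succ_ne_zero n)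

lemma ddist_eq_one {V : Type*} {E : Finset (V × V)} {v w : V} (hne : v ≠ w)
    (h : HasWalk E v w 1) : ddist E v w = 1 :=
  le_antisymm (by exact_mod_cast ddist_le h) (one_le_ddist hne)

lemma ddist_eq_top_src {V : Type*} {E : Finset (V × V)} {v w : V} (hne : v ≠ w)
    (h : ∀ q, (v, q) ∉ E) : ddist E v w = ⊤ := by
  rw [ddist, sInf_eq_top]
  rintro x ⟨n, ⟨f, h0, hl, hE⟩, rfl⟩
  rcases n with _ | n
  · exact absurd (h0 ▸ hl ▸ rfl) hne
  · have := hE 0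
    rw [show (0 : Fin (n+1)).castSucc = 0 from rfl, h0] at this
    exact absurd this (h _)

lemma ddist_eq_top_tgt {V : Type*} {E : Finset (V × V)} {v w : V} (hne : v ≠ w)
    (h : ∀ p, (p, w) ∉ E) : ddist E v w = ⊤ := by
  rw [ddist, sInf_eq_top]
  rintro x ⟨n, ⟨f, h0, hl, hE⟩, rfl⟩
  rcases n with _ | n
  · exact absurd (h0 ▸ hl ▸ rfl) hne
  · have := hE (Fin.last n)
    rw [show (Fin.last n).succ = Fin.last (n+1) from rfl, hl] at this
    exact absurd this (h _)

/-- The efficiency sum of the original graph is exactly `6`. -/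
lemma sumG : ∑ v : Fin 6, ∑ w : Fin 6, (if v ≠ w then (ddist E6 v w)⁻¹ else 0) = 6 := by
  have hdiag : ∀ x : Fin 6, (x,x) ∉ E6 := by decide
  have hcover : ∀ v w : Fin 6, (v,w) ∉ E6 → v ≠ w →
      (∀ q : Fin 6, (v,q) ∉ E6) ∨ (∀ p : Fin 6, (p,w) ∉ E6) := by decide
  have hval : ∀ v w : Fin 6, (if v ≠ w then (ddist E6 v w)⁻¹ else 0)
      = (if (v,w) ∈ E6 then 1 else 0) := by
    intro v w
    by_cases hvw : v = w
    · subst hvw; simp [hdiag v]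
    · by_cases he : (v,w) ∈ E6
      · rw [if_pos hvw, if_pos he,
          ddist_eq_one hvw ⟨![v,w], rfl, rfl, fun i => by fin_cases i; simpa⟩]
        simp
      · rw [if_pos hvw, if_neg he]
        rcases hcover v w he hvw with h | h
        · rw [ddist_eq_top_src hvw h]; simp
        · rw [ddist_eq_top_tgt hvw h]; simp
  simp only [hval]
  rw [← Finset.sum_product']
  simp only [Finset.sum_ite_mem]
  rw [show (Finset.univ ×ˢ Finset.univ : Finset (Fin 6 × Fin 6)) ∩ E6 = E6 by
    exact Finset.inter_eq_right.mpr (Finset.subset_univ _)]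
  rw [Finset.sum_const, show E6.card = 6 from by decide]
  simp

def E7 : Finset (Option (Fin 6) × Option (Fin 6)) := splitEdges E6 L6 1
def S1 : Finset (Option (Fin 6) × Option (Fin 6)) :=
  {(some 0, some 1),(some 1, some 0),(some 0, some 2),(some 2, some 0),
   (none, some 2),(some 2, none)}
def S2 : Finset (Option (Fin 6) × Option (Fin 6)) :=
  {(some 1, some 2),(some 2, some 1),(some 0, none),(none, some 0)}
def S3 : Finset (Option (Fin 6) × Option (Fin 6)) :=
  {(some 1, none),(none, some 1)}

lemma hasWalk2 {V : Type*} {E : Finset (V × V)} {a b c : V}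
    (h1 : (a,b) ∈ E) (h2 : (b,c) ∈ E) : HasWalk E a c 2 :=
  ⟨![a,b,c], rfl, rfl, fun i => by fin_cases i <;> simpa⟩

lemma hasWalk3 {V : Type*} {E : Finset (V × V)} {a b c d : V}
    (h1 : (a,b) ∈ E) (h2 : (b,c) ∈ E) (h3 : (c,d) ∈ E) : HasWalk E a d 3 :=
  ⟨![a,b,c,d], rfl, rfl, fun i => by fin_cases i <;> simpa⟩

set_option maxRecDepth 4000 in
lemma hw1 : ∀ p ∈ S1, HasWalk E7 p.1 p.2 1 := by decide

lemma hw2 : ∀ p ∈ S2, HasWalk E7 p.1 p.2 2 := by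
  intro p hp
  fin_cases hp
  · exact hasWalk2 (a := some 1) (b := some 0) (by decide) (by decide)
  · exact hasWalk2 (a := some 2) (b := some 0) (by decide) (by decide)
  · exact hasWalk2 (a := some 0) (b := some 2) (by decide) (by decide)
  · exact hasWalk2 (a := none) (b := some 2) (by decide) (by decide)

lemma hw3 : ∀ p ∈ S3, HasWalk E7 p.1 p.2 3 := by
  intro p hp
  fin_cases hp
  · exact hasWalk3 (b := some 0) (c := some 2) (by decide) (by decide) (by decide)
  · exact hasWalk3 (b := some 2) (c := some 0) (by decide) (by decide) (by decide)

/-- Lower bounds for the inverse distances in the split graph. -/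
noncomputable def b (v w : Option (Fin 6)) : ℝ≥0∞ :=
  if (v,w) ∈ S1 then 1 else if (v,w) ∈ S2 then 2⁻¹ else if (v,w) ∈ S3 then 3⁻¹ else 0

lemma inv_nat_le_term {E : Finset (Option (Fin 6) × Option (Fin 6))}
    {v w : Option (Fin 6)} {n : ℕ} (h : HasWalk E v w n) (hne : v ≠ w) :
    ((n : ℝ≥0∞))⁻¹ ≤ (if v ≠ w then (ddist E v w)⁻¹ else 0) := by
  rw [if_pos hne]
  exact ENNReal.inv_le_inv.mpr (ddist_le h)

lemma b_le : ∀ v w : Option (Fin 6),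
    b v w ≤ (if v ≠ w then (ddist E7 v w)⁻¹ else 0) := by
  have hne : ∀ p ∈ S1 ∪ S2 ∪ S3, p.1 ≠ p.2 := by decide
  intro v w
  unfold b
  by_cases h1 : (v,w) ∈ S1
  · rw [if_pos h1]
    simpa using inv_nat_le_term (hw1 _ h1) (hne (v,w) (by simp [h1]))
  · rw [if_neg h1]
    by_cases h2 : (v,w) ∈ S2
    · rw [if_pos h2]
      simpa using inv_nat_le_term (hw2 _ h2) (hne (v,w) (by simp [h2]))
    · rw [if_neg h2]
      by_cases h3 : (v,w) ∈ S3
      · rw [if_pos h3]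
        simpa using inv_nat_le_term (hw3 _ h3) (hne (v,w) (by simp [h3]))
      · rw [if_neg h3]; exact zero_le

lemma sumb : ∑ v : Option (Fin 6), ∑ w : Option (Fin 6), b v w = 26/3 := by
  simp (config := { decide := true }) only [Fintype.sum_option, Fin.sum_univ_six, b, S1, S2,
    S3, Finset.mem_insert, Finset.mem_singleton, Prod.mk.injEq, Option.some.injEq, if_true,
    if_false, and_true, and_false, true_and, false_and, or_false, false_or, or_true, true_or]
  norm_num
  rw [ENNReal.eq_div_iff (by norm_num) (by norm_num)]
  have i2 : (2⁻¹ : ℝ≥0∞) * 12 = 6 := by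
    rw [show (12:ℝ≥0∞) = 2*6 by norm_num, ← mul_assoc,
      ENNReal.inv_mul_cancel (by norm_num) (by norm_num), one_mul]
  have i3 : (3⁻¹ : ℝ≥0∞) * 6 = 2 := by
    rw [show (6:ℝ≥0∞) = 3*2 by norm_num, ← mul_assoc,
      ENNReal.inv_mul_cancel (by norm_num) (by norm_num), one_mul]
  ring_nf
  rw [i2, i3]
  norm_num

/-- There is a finite directed graph and a node splitting (rerouting a
nonempty proper subset of the edges incident to a node `v` to a new node)
which strictly increases graph efficiency; i.e. shortest-path based graph
efficiency is not monotone under node splitting. -/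
theorem stmt_7 :
    ∃ (V : Type) (instF : Fintype V) (instD : DecidableEq V)
      (E L : Finset (V × V)) (v : V),
      (∀ x : V, (x, x) ∉ E) ∧
      (∃ e ∈ E, e ∈ L ∧ (e.1 = v ∨ e.2 = v)) ∧
      (∃ e ∈ E, e ∉ L ∧ (e.1 = v ∨ e.2 = v)) ∧
      @SplitIncreasesEff V instF instD E L v := by
  refine ⟨Fin 6, inferInstance, inferInstance, E6, L6, 1, by decide,
    ⟨(1,2), by decide, by decide, Or.inl rfl⟩,
    ⟨(0,1), by decide, by decide, Or.inr rfl⟩, ?_⟩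
  unfold SplitIncreasesEff
  have hG : graphEff (Fin 6) E6 = (30:ℝ≥0∞)⁻¹ * 6 := by
    rw [graphEff, sumG, Fintype.card_fin]
    simp only [Nat.cast_ofNat]
    rw [show ((6:ℝ≥0∞) - 1) = 5 from ENNReal.sub_eq_of_eq_add (by norm_num) (by norm_num)]
    norm_num
  have hH : (42:ℝ≥0∞)⁻¹ * (26/3) ≤ graphEff (Option (Fin 6)) (splitEdges E6 L6 1) := by
    rw [graphEff]
    have hcard : (Fintype.card (Option (Fin 6)) : ℝ≥0∞) = 7 := by simp
    rw [hcard, show ((7:ℝ≥0∞) - 1) = 6 from ENNReal.sub_eq_of_eq_add (by norm_num) (by norm_num),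
      show ((7:ℝ≥0∞) * 6)⁻¹ = 42⁻¹ by norm_num]
    refine mul_le_mul_right ?_ _
    rw [← sumb]
    exact Finset.sum_le_sum fun v _ => Finset.sum_le_sum fun w _ => b_le v w
  refine lt_of_lt_of_le ?_ hH
  rw [hG]
  have h1 : (30:ℝ≥0∞)⁻¹ * 6 = 6/30 := by rw [div_eq_mul_inv, mul_comm]
  have h2 : (42:ℝ≥0∞)⁻¹ * (26/3) = 26/126 := by
    rw [div_eq_mul_inv, div_eq_mul_inv, mul_comm, mul_assoc,
      ← ENNReal.mul_inv (by norm_num) (by norm_num)]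
    norm_num
  rw [h1, h2, ENNReal.div_lt_iff (by norm_num) (by norm_num), mul_comm, ← mul_div_assoc,
    ENNReal.lt_div_iff_mul_lt (by norm_num) (by norm_num)]
  norm_num
end

section
/- Average total communicability F(G) = (1/|V_G|²) ∑_{v,w} (exp(A_G))_{vw} is strictly decreasing under node splitting: if G̃ results from a nontrivial node split of a node in G, then F(G̃) < F(G). -/
open Matrix

/-- Adjacency matrix (over `ℝ`) of the directed graph with edge set `E`. -/
def adjMat (V : Type*) [DecidableEq V] (E : Finset (V × V)) : Matrix V V ℝ :=
  Matrix.of fun x y => if (x, y) ∈ E then 1 else 0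

/-- Average total communicability
`F(G) = (1/|V|²) ∑_{v,w} (exp A_G)_{vw}`. -/
noncomputable def avgComm (V : Type*) [Fintype V] [DecidableEq V]
    (E : Finset (V × V)) : ℝ :=
  ((Fintype.card V : ℝ) ^ 2)⁻¹ *
    ∑ x : V, ∑ y : V, NormedSpace.exp (adjMat V E) x y

section EntryLemmas
variable {l m n : Type*} [Fintype m]

lemma entry_mul_nonneg' {A : Matrix l m ℝ} {B : Matrix m n ℝ} (hA : ∀ i j, 0 ≤ A i j)
    (hB : ∀ i j, 0 ≤ B i j) : ∀ i j, 0 ≤ (A * B) i j := fun i j =>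
  Finset.sum_nonneg fun k _ => mul_nonneg (hA i k) (hB k j)

lemma entry_mul_le_mul' {A B : Matrix l m ℝ} {C D : Matrix m n ℝ}
    (hAB : ∀ i j, A i j ≤ B i j) (hCD : ∀ i j, C i j ≤ D i j)
    (hA : ∀ i j, 0 ≤ A i j) (hD : ∀ i j, 0 ≤ D i j) :
    ∀ i j, (A * C) i j ≤ (B * D) i j := by
  intro i j
  apply Finset.sum_le_sum
  intro k _
  calc A i k * C k j ≤ A i k * D k j := mul_le_mul_of_nonneg_left (hCD k j) (hA i k)
    _ ≤ B i k * D k j := mul_le_mul_of_nonneg_right (hAB i k) (hD k j)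

lemma entry_pow_nonneg' {A : Matrix m m ℝ} [DecidableEq m] (hA : ∀ i j, 0 ≤ A i j) (k : ℕ) :
    ∀ i j, 0 ≤ (A ^ k) i j := by
  induction k with
  | zero => intro i j; rw [pow_zero]; by_cases h : i = j <;> simp [Matrix.one_apply, h]
  | succ k ih => rw [pow_succ]; exact entry_mul_nonneg' ih hA

end EntryLemmas

section Merge
set_option linter.unusedSectionVars false
variable {V : Type*} [Fintype V] [DecidableEq V]

/-- merging matrix -/
def mergeM (V : Type*) [DecidableEq V] (v : V) : Matrix V (Option V) ℝ :=
  Matrix.of fun x x' => if x'.getD v = x then 1 else 0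

lemma mergeM_nonneg (v : V) (x : V) (x' : Option V) : 0 ≤ mergeM V v x x' := by
  simp only [mergeM, Matrix.of_apply]; split <;> norm_num

lemma mergeM_colsum (v : V) (x' : Option V) : ∑ x : V, mergeM V v x x' = 1 := by
  simp [mergeM]

lemma mtm_ge_one (v : V) (i j : Option V) :
    (1 : Matrix (Option V) (Option V) ℝ) i j ≤ ((mergeM V v)ᵀ * mergeM V v) i j := by
  by_cases h : i = j
  · subst h
    simp [mul_apply, transpose_apply, mergeM, ite_and, mul_ite]
  · have : (1 : Matrix (Option V) (Option V) ℝ) i j = 0 := Matrix.one_apply_ne h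
    rw [this]
    exact Finset.sum_nonneg fun k _ => mul_nonneg (mergeM_nonneg v k i) (mergeM_nonneg v k j)

lemma sum_conj (v : V) (C : Matrix (Option V) (Option V) ℝ) :
    ∑ x : V, ∑ y : V, (mergeM V v * C * (mergeM V v)ᵀ) x y = ∑ i, ∑ j, C i j := by
  have h1 : ∀ x : V, ∑ y : V, (mergeM V v * C * (mergeM V v)ᵀ) x y
      = ∑ j, (mergeM V v * C) x j := by
    intro x
    have : ∑ y : V, (mergeM V v * C * (mergeM V v)ᵀ) x y
        = ∑ j, (mergeM V v * C) x j * (∑ y : V, mergeM V v y j) := by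
      simp only [mul_apply, transpose_apply, Finset.mul_sum]
      exact Finset.sum_comm
    rw [this]
    simp [mergeM_colsum]
  simp only [h1]
  refine Finset.sum_comm.trans ?_
  have h2 : ∀ j, ∑ x : V, (mergeM V v * C) x j = ∑ i, C i j := by
    intro j
    have : ∑ x : V, (mergeM V v * C) x j = ∑ i, (∑ x : V, mergeM V v x i) * C i j := by
      simp only [mul_apply, Finset.sum_mul]
      exact Finset.sum_comm
    rw [this]
    simp [mergeM_colsum]
  simp only [h2]
  exact Finset.sum_comm

lemma conj_entry (v : V) (C : Matrix (Option V) (Option V) ℝ) (x y : V) :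
    (mergeM V v * C * (mergeM V v)ᵀ) x y =
      C (some x) (some y) + (if x = v then C none (some y) else 0)
      + (if y = v then C (some x) none else 0)
      + (if x = v ∧ y = v then C none none else 0) := by
  simp only [mul_apply, transpose_apply, mergeM, Matrix.of_apply, Fintype.sum_option,
    Option.getD_none, Option.getD_some, ite_mul, mul_ite, one_mul, mul_one, zero_mul, mul_zero,
    Finset.sum_ite_eq', Finset.mem_univ, if_true, Finset.sum_add_distrib]
  by_cases hx : x = v <;> by_cases hy : y = v
  · simp [hx, hy]; ring
  · simp [hx, hy, Ne.symm hy]; ring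
  · simp [hx, hy, Ne.symm hx]; ring
  · simp [hx, hy, Ne.symm hx, Ne.symm hy]

variable {E L : Finset (V × V)} {v a b : V}

lemma mem_ss : (some a, some b) ∈ splitEdges E L v ↔
    ((a, b) ∈ E ∧ ¬((a, b) ∈ L ∧ a = v) ∧ ¬((a, b) ∈ L ∧ b = v)) := by
  simp only [splitEdges, Finset.mem_image]
  constructor
  · rintro ⟨e, he, heq⟩
    split_ifs at heq with h1 h2 <;> simp_all [Prod.ext_iff]
    obtain ⟨rfl, rfl⟩ := heq
    exact ⟨he, h1, h2⟩
  · rintro ⟨hE, h1, h2⟩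
    exact ⟨(a, b), hE, by simp [h1, h2]⟩

lemma mem_ns : (none, some b) ∈ splitEdges E L v ↔ ((v, b) ∈ E ∧ (v, b) ∈ L) := by
  simp only [splitEdges, Finset.mem_image]
  constructor
  · rintro ⟨e, he, heq⟩
    split_ifs at heq with h1 h2 <;> simp_all [Prod.ext_iff]
    obtain ⟨rfl⟩ := heq
    obtain ⟨hL, hv⟩ := h1
    subst hv
    exact ⟨he, hL⟩
  · rintro ⟨hE, hL⟩
    exact ⟨(v, b), hE, by simp [hL]⟩

lemma mem_sn : (some a, none) ∈ splitEdges E L v ↔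
    ((a, v) ∈ E ∧ (a, v) ∈ L ∧ a ≠ v) := by
  simp only [splitEdges, Finset.mem_image]
  constructor
  · rintro ⟨e, he, heq⟩
    split_ifs at heq with h1 h2 <;> simp_all [Prod.ext_iff]
    obtain ⟨hL, h2v⟩ := h2
    have hea : (a, v) = e := by rw [← heq, ← h2v]
    rw [hea]
    exact ⟨he, hL⟩
  · rintro ⟨hE, hL, hav⟩
    refine ⟨(a, v), hE, ?_⟩
    rw [if_neg (by simp [hav]), if_pos ⟨hL, rfl⟩]

lemma mem_nn : (none, none) ∉ splitEdges E L v := by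
  simp only [splitEdges, Finset.mem_image]
  rintro ⟨e, he, heq⟩
  split_ifs at heq <;> simp_all

lemma adj_conj (E L : Finset (V × V)) (v : V) (hirr : ∀ x : V, (x, x) ∉ E) :
    adjMat V E = mergeM V v * adjMat (Option V) (splitEdges E L v) * (mergeM V v)ᵀ := by
  ext x y
  rw [conj_entry]
  simp only [adjMat, Matrix.of_apply, mem_ss, mem_ns, mem_sn, mem_nn]
  by_cases hx : x = v <;> by_cases hy : y = v <;>
    by_cases hE : (x, y) ∈ E <;> by_cases hL : (x, y) ∈ L <;>
      simp_all

lemma adj_nonneg {W : Type*} [DecidableEq W] (F : Finset (W × W)) :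
    ∀ i j, 0 ≤ adjMat W F i j := by
  intro i j; simp only [adjMat, Matrix.of_apply]; split <;> norm_num

/-- the key power inequality -/
lemma pow_conj_le (E L : Finset (V × V)) (v : V) (hirr : ∀ x : V, (x, x) ∉ E) (k : ℕ) :
    ∀ x y : V, (mergeM V v * (adjMat (Option V) (splitEdges E L v)) ^ (k + 1) * (mergeM V v)ᵀ) x y
      ≤ (adjMat V E ^ (k + 1)) x y := by
  set M := mergeM V v with hM
  set B := adjMat (Option V) (splitEdges E L v) with hB
  have hBn : ∀ i j, 0 ≤ B i j := adj_nonneg _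
  have hMn : ∀ i j, 0 ≤ M i j := mergeM_nonneg v
  have hMtn : ∀ i j, 0 ≤ Mᵀ i j := fun i j => hMn j i
  have hBkn : ∀ k : ℕ, ∀ i j, 0 ≤ (B ^ k) i j := entry_pow_nonneg' hBn
  have hAkn : ∀ k : ℕ, ∀ i j, 0 ≤ (adjMat V E ^ k) i j := entry_pow_nonneg' (adj_nonneg _)
  induction k with
  | zero =>
      intro x y
      rw [pow_one, pow_one, adj_conj E L v hirr]
  | succ k ih =>
      intro x y
      have hPn : ∀ i j, 0 ≤ (M * B ^ (k + 1)) i j :=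
        entry_mul_nonneg' hMn (hBkn (k + 1))
      have hQn : ∀ i j, 0 ≤ (B * Mᵀ) i j := entry_mul_nonneg' hBn hMtn
      have step1 : (M * B ^ (k + 2) * Mᵀ) x y = ((M * B ^ (k + 1)) * (B * Mᵀ)) x y := by
        rw [pow_succ, ← Matrix.mul_assoc, ← Matrix.mul_assoc, Matrix.mul_assoc (M * B ^ (k+1))]
      have hMtMn : ∀ i j, 0 ≤ (Mᵀ * M) i j := entry_mul_nonneg' hMtn hMn
      have step2 : ((M * B ^ (k + 1)) * (B * Mᵀ)) x y
          ≤ ((M * B ^ (k + 1)) * ((Mᵀ * M) * (B * Mᵀ))) x y := by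
        have h1 : ∀ i j, ((1 : Matrix (Option V) (Option V) ℝ) * (B * Mᵀ)) i j
            ≤ ((Mᵀ * M) * (B * Mᵀ)) i j :=
          entry_mul_le_mul' (mtm_ge_one v) (fun i j => le_refl _)
            (fun i j => by by_cases h : i = j <;> simp [Matrix.one_apply, h]) hQn
        have h2 := entry_mul_le_mul' (A := M * B ^ (k+1)) (B := M * B ^ (k+1))
          (C := (1 : Matrix (Option V) (Option V) ℝ) * (B * Mᵀ)) (D := (Mᵀ * M) * (B * Mᵀ))
          (fun i j => le_refl _) h1 hPn
          (entry_mul_nonneg' hMtMn hQn)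
        have h3 := h2 x y
        rwa [Matrix.one_mul] at h3
      have e3 : (M * B ^ (k + 1)) * ((Mᵀ * M) * (B * Mᵀ))
          = (M * B ^ (k + 1) * Mᵀ) * (M * B * Mᵀ) := by
        simp only [Matrix.mul_assoc]
      have step3 : ((M * B ^ (k + 1)) * ((Mᵀ * M) * (B * Mᵀ))) x y
          = ((M * B ^ (k + 1) * Mᵀ) * (M * B * Mᵀ)) x y := by rw [e3]
      have step4 : ((M * B ^ (k + 1) * Mᵀ) * (M * B * Mᵀ)) x y
          ≤ (adjMat V E ^ (k + 1) * adjMat V E) x y := by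
        apply entry_mul_le_mul' ih
          (fun i j => le_of_eq (by rw [← adj_conj E L v hirr]))
          (entry_mul_nonneg' (entry_mul_nonneg' hMn (hBkn (k+1))) hMtn)
          (adj_nonneg _)
      calc (M * B ^ (k + 1 + 1) * Mᵀ) x y = ((M * B ^ (k + 1)) * (B * Mᵀ)) x y := step1
        _ ≤ ((M * B ^ (k + 1)) * ((Mᵀ * M) * (B * Mᵀ))) x y := step2
        _ = ((M * B ^ (k + 1) * Mᵀ) * (M * B * Mᵀ)) x y := step3
        _ ≤ (adjMat V E ^ (k + 1) * adjMat V E) x y := step4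
        _ = (adjMat V E ^ (k + 1 + 1)) x y := by rw [← pow_succ]

end Merge

section Analysis

lemma hasSum_entrysum {n : Type*} [Fintype n] [DecidableEq n] (A : Matrix n n ℝ) :
    HasSum (fun k : ℕ => ∑ x, ∑ y, ((Nat.factorial k : ℝ))⁻¹ * (A ^ k) x y)
      (∑ x, ∑ y, NormedSpace.exp A x y) := by
  have hsummable : Summable fun k : ℕ => ((Nat.factorial k : ℝ))⁻¹ • A ^ k := by
    letI : SeminormedRing (Matrix n n ℝ) := Matrix.linftyOpSemiNormedRing
    letI : NormedRing (Matrix n n ℝ) := Matrix.linftyOpNormedRing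
    letI : NormedAlgebra ℝ (Matrix n n ℝ) := Matrix.linftyOpNormedAlgebra
    exact NormedSpace.expSeries_summable' (𝕂 := ℝ) A
  have h1 : HasSum (fun k : ℕ => ((Nat.factorial k : ℝ))⁻¹ • A ^ k)
      (NormedSpace.exp A) := by
    rw [NormedSpace.exp_eq_tsum ℝ]
    exact hsummable.hasSum
  have h2 : ∀ x y : n, HasSum (fun k : ℕ => ((Nat.factorial k : ℝ))⁻¹ * (A ^ k) x y)
      (NormedSpace.exp A x y) := by
    intro x y
    have := (Pi.hasSum.mp ((Pi.hasSum.mp h1) x)) y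
    simpa [Matrix.smul_apply, smul_eq_mul] using this
  have h3 : ∀ x : n, HasSum (fun k : ℕ => ∑ y, ((Nat.factorial k : ℝ))⁻¹ * (A ^ k) x y)
      (∑ y, NormedSpace.exp A x y) := fun x => hasSum_sum fun y _ => h2 x y
  exact hasSum_sum fun x _ => h3 x

end Analysis

/-- Average total communicability is strictly decreasing under a nontrivial
node splitting. -/
theorem stmt_9 {V : Type*} [Fintype V] [DecidableEq V]
    (E L : Finset (V × V)) (v : V) (hirr : ∀ x : V, (x, x) ∉ E)
    (hnontriv : ∃ e ∈ E, e ∈ L ∧ (e.1 = v ∨ e.2 = v)) :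
    avgComm (Option V) (splitEdges E L v) < avgComm V E := by
  classical
  set A := adjMat V E with hA
  set B := adjMat (Option V) (splitEdges E L v) with hBdef
  set N : ℕ := Fintype.card V with hNdef
  have hN1 : 1 ≤ N := Fintype.card_pos_iff.mpr ⟨v⟩
  set fA : ℕ → ℝ := fun k => ∑ x, ∑ y, ((Nat.factorial k : ℝ))⁻¹ * (A ^ k) x y with hfA
  set fB : ℕ → ℝ := fun k => ∑ x, ∑ y, ((Nat.factorial k : ℝ))⁻¹ * (B ^ k) x y with hfB
  set s : ℝ := ∑ x, ∑ y, NormedSpace.exp A x y with hs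
  set t : ℝ := ∑ x, ∑ y, NormedSpace.exp B x y with ht
  have hAsum : HasSum fA s := hasSum_entrysum A
  have hBsum : HasSum fB t := hasSum_entrysum B
  have hBn : ∀ k : ℕ, ∀ i j, 0 ≤ (B ^ k) i j := entry_pow_nonneg' (adj_nonneg _)
  have hfBnn : ∀ k, 0 ≤ fB k := by
    intro k
    refine Finset.sum_nonneg fun x _ => Finset.sum_nonneg fun y _ => ?_
    exact mul_nonneg (by positivity) (hBn k x y)
  -- value at 0
  have hfB0 : fB 0 = (N : ℝ) + 1 := by
    simp [hfB, Matrix.one_apply, Finset.sum_ite_eq', Fintype.card_option, hNdef]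
    ring
  have hfA0 : fA 0 = (N : ℝ) := by
    simp [hfA, Matrix.one_apply, Finset.sum_ite_eq', hNdef]
  -- k ≥ 1 comparison
  have hcompare : ∀ k, fB k ≤ fA k + (if k = 0 then (1:ℝ) else 0) := by
    intro k
    cases k with
    | zero => simp [hfB0, hfA0]
    | succ k =>
        simp only [Nat.succ_ne_zero, if_false, add_zero]
        have hsum := sum_conj v (B ^ (k + 1))
        have hle : ∑ x, ∑ y, (mergeM V v * B ^ (k + 1) * (mergeM V v)ᵀ) x y
            ≤ ∑ x, ∑ y, (A ^ (k + 1)) x y := by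
          refine Finset.sum_le_sum fun x _ => Finset.sum_le_sum fun y _ => ?_
          exact pow_conj_le E L v hirr k x y
        have : ∑ i, ∑ j, (B ^ (k + 1)) i j ≤ ∑ x, ∑ y, (A ^ (k + 1)) x y := by
          rw [← hsum]; exact hle
        calc fB (k + 1) = ((Nat.factorial (k+1) : ℝ))⁻¹ * ∑ i, ∑ j, (B ^ (k + 1)) i j := by
              simp only [hfB]
              rw [Finset.mul_sum]
              exact Finset.sum_congr rfl fun x _ => by rw [Finset.mul_sum]
          _ ≤ ((Nat.factorial (k+1) : ℝ))⁻¹ * ∑ x, ∑ y, (A ^ (k + 1)) x y := by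
              apply mul_le_mul_of_nonneg_left this (by positivity)
          _ = fA (k + 1) := by
              simp only [hfA]
              rw [Finset.mul_sum]
              exact (Finset.sum_congr rfl fun x _ => by rw [Finset.mul_sum]).symm
  -- t ≤ s + 1
  have hts : t ≤ s + 1 := by
    have hind : HasSum (fun k : ℕ => if k = 0 then (1:ℝ) else 0) 1 := by
      simpa using hasSum_ite_eq (0 : ℕ) (1 : ℝ)
    exact hasSum_le hcompare hBsum (hAsum.add hind)
  -- t ≥ N + 1
  have htN : (N : ℝ) + 1 ≤ t := by
    have := le_hasSum hBsum 0 fun k _ => hfBnn k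
    rwa [hfB0] at this
  -- final arithmetic
  have hcardO : (Fintype.card (Option V) : ℝ) = (N : ℝ) + 1 := by
    simp [Fintype.card_option, hNdef]
  rw [avgComm, avgComm, hcardO, ← hA, ← hBdef, ← hs, ← ht]
  have hNpos : (0:ℝ) < (N:ℝ) := by exact_mod_cast hN1
  have h1 : (0:ℝ) < ((N:ℝ))^2 := by positivity
  have h2 : (0:ℝ) < ((N:ℝ) + 1)^2 := by positivity
  rw [← div_eq_inv_mul, ← div_eq_inv_mul, div_lt_div_iff₀ h2 h1]
  nlinarith [mul_le_mul_of_nonneg_right hts (le_of_lt h2),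
    mul_le_mul_of_nonneg_left htN (le_of_lt (by positivity : (0:ℝ) < 2*(N:ℝ)+1))]
end

section
/- Among all undirected trees on N ≥ 2 vertices, the second moment of the degree distribution E[K²] = (1/N) ∑_v (deg v)² is minimized by the path (line) graph, whose value is (4N − 6)/N for N ≥ 2. -/
/-- The degree of a vertex of a simple graph, as the number of its neighbors. -/
noncomputable def sdeg {V : Type*} (G : SimpleGraph V) (v : V) : ℕ :=
  {w | G.Adj v w}.ncard

/-- Second moment `E[K²] = (1/N) ∑_v (deg v)²` of the degree distribution of
an undirected graph. -/
noncomputable def sndMomDeg (V : Type*) [Fintype V] (G : SimpleGraph V) : ℝ :=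
  ((Fintype.card V : ℝ))⁻¹ * ∑ v : V, (sdeg G v : ℝ) ^ 2

lemma sdeg_eq_degree {V : Type*} [Fintype V] (G : SimpleGraph V) [DecidableRel G.Adj] (v : V) :
    sdeg G v = G.degree v := by
  have h : {w | G.Adj v w} = ↑(G.neighborFinset v) := by ext w; simp
  rw [sdeg, h, Set.ncard_coe_finset, SimpleGraph.degree]

lemma reach_invariant {V : Type*} {G : SimpleGraph V} {p : V → Prop}
    (h : ∀ a b, G.Adj a b → (p a ↔ p b)) {u v : V} (huv : G.Reachable u v) : p u ↔ p v := by
  obtain ⟨w⟩ := huv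
  induction w with
  | nil => rfl
  | cons hadj _ ih => exact (h _ _ hadj).trans ih

lemma pathGraph_key {n : ℕ} (u v : Fin n) (huv : u.val + 1 = v.val) (a b : Fin n)
    (hab : ((SimpleGraph.pathGraph n) \ SimpleGraph.fromEdgeSet {s(u, v)}).Adj a b) :
    (a.val ≤ u.val ↔ b.val ≤ u.val) := by
  obtain ⟨h1, h2⟩ := hab
  have hne : a ≠ b := h1.ne
  rw [SimpleGraph.pathGraph_adj] at h1
  rw [SimpleGraph.fromEdgeSet_adj] at h2
  push_neg at h2
  have h3 : s(a, b) ≠ s(u, v) := by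
    intro he
    exact hne (h2 (by rw [he]; exact Set.mem_singleton _))
  rw [ne_eq, Sym2.eq_iff] at h3
  push_neg at h3
  simp only [Fin.ext_iff] at h3
  omega

lemma pathGraph_isAcyclic (n : ℕ) : (SimpleGraph.pathGraph n).IsAcyclic := by
  rw [SimpleGraph.isAcyclic_iff_forall_adj_isBridge]
  intro v w hvw
  rw [SimpleGraph.pathGraph_adj] at hvw
  intro hreach
  rcases hvw with h | h
  · have := reach_invariant (p := fun x => x.val ≤ v.val) (pathGraph_key v w h) hreach
    simp only at this
    omega
  · have hs : s(v, w) = s(w, v) := Sym2.eq_swap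
    rw [hs] at hreach
    have := reach_invariant (p := fun x => x.val ≤ w.val) (pathGraph_key w v h) hreach.symm
    simp only at this
    omega

lemma pathGraph_sdeg {n : ℕ} (hn : 2 ≤ n) (i : Fin n) :
    sdeg (SimpleGraph.pathGraph n) i = 1 ∨ sdeg (SimpleGraph.pathGraph n) i = 2 := by
  have hi := i.isLt
  rcases Nat.eq_zero_or_pos i.val with h0 | h0
  · left
    have hset : {w | (SimpleGraph.pathGraph n).Adj i w} = {(⟨1, by omega⟩ : Fin n)} := by
      ext w
      simp only [Set.mem_setOf_eq, SimpleGraph.pathGraph_adj, Set.mem_singleton_iff, Fin.ext_iff]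
      omega
    rw [sdeg, hset, Set.ncard_singleton]
  rcases Nat.lt_or_ge (i.val + 1) n with h1 | h1
  · right
    have hset : {w | (SimpleGraph.pathGraph n).Adj i w} =
        {(⟨i.val - 1, by omega⟩ : Fin n), (⟨i.val + 1, h1⟩ : Fin n)} := by
      ext w
      simp only [Set.mem_setOf_eq, SimpleGraph.pathGraph_adj, Set.mem_insert_iff,
        Set.mem_singleton_iff, Fin.ext_iff]
      omega
    rw [sdeg, hset, Set.ncard_pair (by simp only [ne_eq, Fin.ext_iff]; omega)]
  · left
    have hset : {w | (SimpleGraph.pathGraph n).Adj i w} = {(⟨i.val - 1, by omega⟩ : Fin n)} := by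
      ext w
      simp only [Set.mem_setOf_eq, SimpleGraph.pathGraph_adj, Set.mem_singleton_iff, Fin.ext_iff]
      omega
    rw [sdeg, hset, Set.ncard_singleton]

lemma tree_sum_sdeg {V : Type*} [Fintype V] (G : SimpleGraph V) (hG : G.IsTree) :
    ∑ v, sdeg G v = 2 * (Fintype.card V - 1) := by
  classical
  have h1 : ∑ v, sdeg G v = ∑ v, G.degree v := by
    apply Finset.sum_congr rfl
    intro v _
    exact sdeg_eq_degree G v
  rw [h1, SimpleGraph.sum_degrees_eq_twice_card_edges]
  have h2 := hG.card_edgeFinset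
  omega

lemma tree_sum_sq_ge {V : Type*} [Fintype V] (G : SimpleGraph V) (hG : G.IsTree)
    (hcard : 2 ≤ Fintype.card V) :
    4 * (Fintype.card V : ℝ) - 6 ≤ ∑ v : V, (sdeg G v : ℝ) ^ 2 := by
  obtain ⟨M, hM⟩ : ∃ M, Fintype.card V = M + 2 := ⟨Fintype.card V - 2, by omega⟩
  have hsum : ∑ v, sdeg G v = 2 * M + 2 := by rw [tree_sum_sdeg G hG, hM]; omega
  have hsumR : ∑ v : V, (sdeg G v : ℝ) = 2 * (M : ℝ) + 2 := by
    rw [← Nat.cast_sum, hsum]; push_cast; ring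
  have hpt : ∀ v : V, 3 * (sdeg G v : ℝ) - 2 ≤ (sdeg G v : ℝ) ^ 2 := by
    intro v
    rcases le_or_gt (sdeg G v) 1 with h | h
    · have h1 : (sdeg G v : ℝ) ≤ 1 := by exact_mod_cast h
      have h0 : (0 : ℝ) ≤ (sdeg G v : ℝ) := Nat.cast_nonneg _
      nlinarith
    · have h1 : (2 : ℝ) ≤ (sdeg G v : ℝ) := by exact_mod_cast h
      nlinarith
  calc 4 * (Fintype.card V : ℝ) - 6
      = 3 * (2 * (M : ℝ) + 2) - 2 * (Fintype.card V : ℝ) := by rw [hM]; push_cast; ring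
    _ = ∑ v : V, (3 * (sdeg G v : ℝ) - 2) := by
        rw [Finset.sum_sub_distrib, ← Finset.mul_sum, hsumR, Finset.sum_const]
        simp [mul_comm]
    _ ≤ ∑ v : V, (sdeg G v : ℝ) ^ 2 := Finset.sum_le_sum fun v _ => hpt v

/-- Among all undirected trees on `N ≥ 2` vertices, the second moment of the
degree distribution is minimized by the path graph, whose value is
`(4N - 6)/N`. -/
theorem stmt_17 :
    (∀ (V : Type) [Fintype V] (G : SimpleGraph V), G.IsTree →
      2 ≤ Fintype.card V →
      (4 * (Fintype.card V : ℝ) - 6) / (Fintype.card V : ℝ) ≤ sndMomDeg V G) ∧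
    (∀ N : ℕ, 2 ≤ N → (SimpleGraph.pathGraph N).IsTree ∧
      sndMomDeg (Fin N) (SimpleGraph.pathGraph N) = (4 * (N : ℝ) - 6) / (N : ℝ)) := by
  constructor
  · intro V _ G hG hcard
    have hN : (0 : ℝ) < (Fintype.card V : ℝ) := by
      have : 0 < Fintype.card V := by omega
      exact_mod_cast this
    rw [sndMomDeg, div_eq_inv_mul]
    exact mul_le_mul_of_nonneg_left (tree_sum_sq_ge G hG hcard) (inv_nonneg.mpr hN.le)
  · intro N hN
    have htree : (SimpleGraph.pathGraph N).IsTree := by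
      constructor
      · obtain ⟨M, rfl⟩ : ∃ M, N = M + 1 := ⟨N - 1, by omega⟩
        exact SimpleGraph.pathGraph_connected M
      · exact pathGraph_isAcyclic N
    refine ⟨htree, ?_⟩
    have hcard : Fintype.card (Fin N) = N := Fintype.card_fin N
    have hpteq : ∀ v : Fin N, (sdeg (SimpleGraph.pathGraph N) v : ℝ) ^ 2 =
        3 * (sdeg (SimpleGraph.pathGraph N) v : ℝ) - 2 := by
      intro v
      rcases pathGraph_sdeg hN v with h | h <;> rw [h] <;> norm_num
    obtain ⟨M, hM⟩ : ∃ M, N = M + 2 := ⟨N - 2, by omega⟩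
    have hsum : ∑ v, sdeg (SimpleGraph.pathGraph N) v = 2 * M + 2 := by
      rw [tree_sum_sdeg _ htree, hcard, hM]; omega
    have hsumR : ∑ v : Fin N, (sdeg (SimpleGraph.pathGraph N) v : ℝ) = 2 * (M : ℝ) + 2 := by
      rw [← Nat.cast_sum, hsum]; push_cast; ring
    have hS : ∑ v : Fin N, (sdeg (SimpleGraph.pathGraph N) v : ℝ) ^ 2 = 4 * (N : ℝ) - 6 := by
      calc ∑ v : Fin N, (sdeg (SimpleGraph.pathGraph N) v : ℝ) ^ 2
          = ∑ v : Fin N, (3 * (sdeg (SimpleGraph.pathGraph N) v : ℝ) - 2) :=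
            Finset.sum_congr rfl fun v _ => hpteq v
        _ = 3 * (2 * (M : ℝ) + 2) - 2 * (N : ℝ) := by
            rw [Finset.sum_sub_distrib, ← Finset.mul_sum, hsumR, Finset.sum_const]
            simp [hcard, mul_comm]
        _ = 4 * (N : ℝ) - 6 := by rw [hM]; push_cast; ring
    have hNpos : (N : ℝ) ≠ 0 := by
      have : 0 < N := by omega
      exact_mod_cast this.ne'
    rw [sndMomDeg, hcard, hS, div_eq_inv_mul]
end
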